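/- Let η′ be a real (1,1)-form on a quaternionic Hermitian vector space of real dimension 4n satisfying J(η′) = -η′. Then η′ can be diagonalized in an orthonormal (1,0)-coframe ξ_1,...,ξ_{2n} with J(ξ_{2i-1}) = ξ̄_{2i}, J(ξ_{2i}) = -ξ̄_{2i-1}, as η′ = -√-1 Σ α_i ξ_i ∧ ξ̄_i, and its eigenvalues occur in pairs: α_{2i-1} = α_{2i}. -/

import Mathlib

/-!
STATEMENT 16.  Let `η'` be a real `(1,1)`-form on a quaternionic Hermitian vector
space of real dimension `4n` (encoded via its `(1,0)`-space `V`, `dim_ℂ V = 2n`, with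
antilinear `J` and invariant Hermitian metric `h`), satisfying `J(η') = -η'` (with
the `J`-action `(Jη)(x, ȳ) = -η(Jy, Jx)` on block-encoded `(1,1)`-forms).

Then `η'` can be diagonalized in an orthonormal frame adapted to `J`: there is an
`h`-orthonormal basis `e₁, …, e_n, Je₁, …, Je_n` of `V` (dually, a coframe
`ξ₁, …, ξ_{2n}` with `J(ξ_{2i-1}) = ξ̄_{2i}`, `J(ξ_{2i}) = -ξ̄_{2i-1}`) in which
`η' = -√-1 Σ α_i ξ_i ∧ ξ̄_i`, and the eigenvalues occur in pairs: the eigenvalue on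
`e_i` equals the eigenvalue on `J e_i`.
-/

noncomputable section

/-- The action of `J` on (block-encoded) `(1,1)`-forms. -/
def Jact {V : Type*} (J : V → V) (η : V → V → ℂ) : V → V → ℂ :=
  fun x y => -η (J y) (J x)


open Module

local notation "⟪" x ", " y "⟫" => @inner ℂ _ _ x y

lemma aux_diag {V : Type*} [NormedAddCommGroup V] [InnerProductSpace ℂ V]
    [FiniteDimensional ℂ V]
    (J : V → V)
    (hJsmul : ∀ (c : ℂ) x, J (c • x) = (starRingEnd ℂ) c • J x)
    (hJJ : ∀ x, J (J x) = -x)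
    (hJinner : ∀ x y, ⟪J x, J y⟫ = ⟪y, x⟫)
    (T : V →ₗ[ℂ] V)
    (hsym : ∀ x y, ⟪T x, y⟫ = ⟪x, T y⟫)
    (hTJ : ∀ x, T (J x) = J (T x)) :
    ∀ (m : ℕ) (W : Submodule ℂ V), (∀ x ∈ W, J x ∈ W) → (∀ x ∈ W, T x ∈ W) →
      finrank ℂ W = 2 * m →
      ∃ (e : Fin m → V) (α : Fin m → ℝ),
        (∀ i, e i ∈ W) ∧
        (∀ i j, ⟪e i, e j⟫ = if i = j then 1 else 0) ∧
        (∀ i j, ⟪e i, J (e j)⟫ = 0) ∧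
        (∀ i, T (e i) = (α i : ℂ) • e i) := by
  intro m
  induction m with
  | zero =>
    intro W _ _ _
    exact ⟨Fin.elim0, Fin.elim0, fun i => i.elim0, fun i => i.elim0, fun i => i.elim0,
      fun i => i.elim0⟩
  | succ m ih =>
    intro W hJW hTW hrank
    have hJneg : ∀ x, J (-x) = - J x := by
      intro x
      have := hJsmul (-1) x
      simpa using this
    haveI : Nontrivial W := Module.finrank_pos_iff (R := ℂ) |>.mp (by omega)
    obtain ⟨c, hc⟩ := Module.End.exists_eigenvalue (T.restrict hTW)
    obtain ⟨v, hv⟩ := hc.exists_hasEigenvector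
    have hTv : T (v : V) = c • (v : V) := by
      have h1 := hv.apply_eq_smul
      have := congrArg (Subtype.val) h1
      simpa [LinearMap.restrict_apply] using this
    have hv0 : (v : V) ≠ 0 := by
      simpa using hv.right
    -- the eigenvalue is real
    have hcreal : (c.re : ℂ) = c := by
      have h1 : ⟪(v : V), T v⟫ = c * ⟪(v : V), (v : V)⟫ := by
        rw [hTv, inner_smul_right]
      have h2 : (starRingEnd ℂ) ⟪(v : V), T v⟫ = ⟪(v : V), T v⟫ := by
        rw [inner_conj_symm]; exact hsym _ _
      rw [h1, map_mul, inner_conj_symm] at h2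
      have hs : ⟪(v : V), (v : V)⟫ ≠ 0 := inner_self_ne_zero.mpr hv0
      have hcc : (starRingEnd ℂ) c = c := mul_right_cancel₀ hs h2
      rwa [Complex.conj_eq_iff_re] at hcc
    -- normalized eigenvector
    set e0 : V := (‖(v : V)‖ : ℂ)⁻¹ • (v : V) with he0def
    have hnv : (‖(v : V)‖ : ℂ) ≠ 0 := by
      simpa using norm_ne_zero_iff.mpr hv0
    have he0W : e0 ∈ W := W.smul_mem _ v.2
    have he0e0 : ⟪e0, e0⟫ = 1 := by
      rw [he0def, inner_smul_left, inner_smul_right, inner_self_eq_norm_sq_to_K,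
        map_inv₀, Complex.conj_ofReal]
      field_simp
      norm_cast
    have hTe0 : T e0 = c • e0 := by
      rw [he0def, map_smul, hTv, smul_comm]
    have hJe0W : J e0 ∈ W := hJW _ he0W
    have hJe0e0 : ⟪J e0, e0⟫ = 0 := by
      have h1 : ⟪J e0, J (J e0)⟫ = ⟪J e0, e0⟫ := hJinner e0 (J e0)
      rw [hJJ, inner_neg_right] at h1
      linear_combination -h1 / 2
    have he0Je0 : ⟪e0, J e0⟫ = 0 := by
      rw [← inner_conj_symm, hJe0e0, map_zero]
    have hJe0Je0 : ⟪J e0, J e0⟫ = 1 := by rw [hJinner, he0e0]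
    have hTJe0 : T (J e0) = c • J e0 := by
      rw [hTJ, hTe0, hJsmul, ← hcreal, Complex.conj_ofReal]
    -- the span of e0, J e0
    set g : Fin 2 → V := ![e0, J e0] with hgdef
    have hong : Orthonormal ℂ g := by
      rw [orthonormal_iff_ite]
      intro i j
      fin_cases i <;> fin_cases j <;>
        simp [hgdef, he0e0, he0Je0, hJe0e0, hJe0Je0,
          show ‖e0‖ = 1 by rw [norm_eq_sqrt_re_inner (𝕜 := ℂ), he0e0]; simp,
          show ‖J e0‖ = 1 by rw [norm_eq_sqrt_re_inner (𝕜 := ℂ), hJe0Je0]; simp]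
    set K : Submodule ℂ V := Submodule.span ℂ (Set.range g) with hKdef
    have he0K : e0 ∈ K := Submodule.subset_span ⟨0, rfl⟩
    have hJe0K : J e0 ∈ K := Submodule.subset_span ⟨1, rfl⟩
    have hKW : K ≤ W := by
      rw [hKdef, Submodule.span_le]
      rintro x ⟨i, rfl⟩
      fin_cases i
      · exact he0W
      · exact hJe0W
    have hKrank : finrank ℂ K = 2 := by
      rw [hKdef, finrank_span_eq_card hong.linearIndependent]
      simp
    -- membership test for the orthogonal complement
    have hmemKperp : ∀ x, ⟪e0, x⟫ = 0 → ⟪J e0, x⟫ = 0 → x ∈ Kᗮ := by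
      intro x h1 h2
      rw [Submodule.mem_orthogonal]
      intro u hu
      induction hu using Submodule.span_induction with
      | mem u hu =>
        obtain ⟨i, rfl⟩ := hu
        fin_cases i
        · exact h1
        · exact h2
      | zero => simp
      | add u w _ _ hu hw => rw [inner_add_left, hu, hw, add_zero]
      | smul a u _ hu => rw [inner_smul_left, hu, mul_zero]
    have hperp1 : ∀ x ∈ Kᗮ, ⟪e0, x⟫ = 0 := fun x hx =>
      (Submodule.mem_orthogonal K x).mp hx e0 he0K
    have hperp2 : ∀ x ∈ Kᗮ, ⟪J e0, x⟫ = 0 := fun x hx =>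
      (Submodule.mem_orthogonal K x).mp hx (J e0) hJe0K
    -- the complementary subspace
    set W' : Submodule ℂ V := Kᗮ ⊓ W with hW'def
    have hJW' : ∀ x ∈ W', J x ∈ W' := by
      rintro x ⟨hx1, hx2⟩
      refine ⟨hmemKperp _ ?_ ?_, hJW x hx2⟩
      · have h1 : ⟪J (J e0), J x⟫ = ⟪x, J e0⟫ := hJinner (J e0) x
        rw [hJJ, inner_neg_left] at h1
        have h2 : ⟪x, J e0⟫ = 0 := by
          rw [← inner_conj_symm, hperp2 x hx1, map_zero]
        exact neg_eq_zero.mp (h1.trans h2)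
      · have h1 : ⟪J e0, J x⟫ = ⟪x, e0⟫ := hJinner e0 x
        rw [h1, ← inner_conj_symm, hperp1 x hx1, map_zero]
    have hTW' : ∀ x ∈ W', T x ∈ W' := by
      rintro x ⟨hx1, hx2⟩
      refine ⟨hmemKperp _ ?_ ?_, hTW x hx2⟩
      · rw [← hsym, hTe0, inner_smul_left, hperp1 x hx1, mul_zero]
      · rw [← hsym, hTJe0, inner_smul_left, hperp2 x hx1, mul_zero]
    -- dimension count
    have hW'rank : finrank ℂ W' = 2 * m := by
      have hsup : K ⊔ W' = W := Submodule.sup_orthogonal_inf_of_hasOrthogonalProjection hKW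
      have hdisj : K ⊓ W' = ⊥ := by
        rw [eq_bot_iff]
        rintro x ⟨hx1, hx2, _⟩
        have := (Submodule.mem_orthogonal K x).mp hx2 x hx1
        rw [inner_self_eq_zero] at this
        simp [this]
      have := Submodule.finrank_sup_add_finrank_inf_eq K W'
      rw [hsup, hdisj, hrank, hKrank, finrank_bot] at this
      omega
    obtain ⟨e', α', hmem', hon', hcross', heig'⟩ := ih W' hJW' hTW' hW'rank
    have hmem'K : ∀ i, e' i ∈ Kᗮ := fun i => (hmem' i).1
    have hmem'W : ∀ i, e' i ∈ W := fun i => (hmem' i).2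
    refine ⟨Fin.cons e0 e', Fin.cons c.re α', ?_, ?_, ?_, ?_⟩
    · intro i
      refine Fin.cases ?_ ?_ i
      · simpa using he0W
      · intro j
        simpa using hmem'W j
    · intro i j
      refine Fin.cases ?_ (fun i' => ?_) i <;> refine Fin.cases ?_ (fun j' => ?_) j
      · simpa using he0e0
      · rw [Fin.cons_zero, Fin.cons_succ, hperp1 _ (hmem'K j'),
          if_neg (Fin.succ_ne_zero j').symm]
      · rw [Fin.cons_zero, Fin.cons_succ, ← inner_conj_symm, hperp1 _ (hmem'K i'), map_zero,
          if_neg (Fin.succ_ne_zero i')]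
      · rw [Fin.cons_succ, Fin.cons_succ, hon' i' j']
        simp [Fin.succ_inj]
    · intro i j
      refine Fin.cases ?_ (fun i' => ?_) i <;> refine Fin.cases ?_ (fun j' => ?_) j
      · simpa using he0Je0
      · rw [Fin.cons_zero, Fin.cons_succ]
        exact hperp1 _ ((hJW' _ (hmem' j')).1)
      · rw [Fin.cons_succ, Fin.cons_zero, ← inner_conj_symm, hperp2 _ (hmem'K i'), map_zero]
      · rw [Fin.cons_succ, Fin.cons_succ]
        exact hcross' i' j'
    · intro i
      refine Fin.cases ?_ (fun i' => ?_) i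
      · rw [Fin.cons_zero, Fin.cons_zero, hTe0, hcreal]
      · rw [Fin.cons_succ, Fin.cons_succ]
        exact heig' i'

theorem anti_J_invariant_diagonalization
    (V : Type*) [AddCommGroup V] [Module ℂ V] [FiniteDimensional ℂ V]
    (n : ℕ) (hdim : Module.finrank ℂ V = 2 * n)
    (J : V → V)
    (hJadd : ∀ x y, J (x + y) = J x + J y)
    (hJsmul : ∀ (c : ℂ) x, J (c • x) = (starRingEnd ℂ) c • J x)
    (hJJ : ∀ x, J (J x) = -x)
    (h : V → V → ℂ)
    (hherm : ∀ x y, (starRingEnd ℂ) (h x y) = h y x)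
    (hlin : ∀ (c : ℂ) x x' y, h (c • x + x') y = c * h x y + h x' y)
    (hposdef : ∀ x : V, x ≠ 0 → 0 < (h x x).re)
    (hJinv : ∀ x y, h (J x) (J y) = h y x)
    (η' : V → V → ℂ)
    (hη1 : ∀ (c : ℂ) x x' y, η' (c • x + x') y = c * η' x y + η' x' y)
    (hη2 : ∀ (c : ℂ) y y' x, η' x (c • y + y') = (starRingEnd ℂ) c * η' x y + η' x y')
    (hreal : ∀ x y, (starRingEnd ℂ) (η' x y) = -η' y x)
    -- J(η') = -η':
    (hanti : ∀ x y, Jact J η' x y = -η' x y) :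
    ∃ (e : Fin n → V) (b : Basis (Fin n ⊕ Fin n) ℂ V) (α : Fin n → ℝ),
      (∀ i, b (Sum.inl i) = e i) ∧ (∀ i, b (Sum.inr i) = J (e i)) ∧
      -- the frame e₁, …, e_n, Je₁, …, Je_n is h-orthonormal:
      (∀ a a' : Fin n ⊕ Fin n, h (b a) (b a') = if a = a' then 1 else 0) ∧
      -- η' is diagonal in this frame, with eigenvalues occurring in pairs
      -- (α on e_i and again α on J e_i):
      (∀ a a' : Fin n ⊕ Fin n, η' (b a) (b a')
        = if a = a' then
            -Complex.I * (α (Sum.elim id id a) : ℂ)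
          else 0) := by
  classical
  -- the degenerate case n = 0
  rcases Nat.eq_zero_or_pos n with hn | hn
  · subst hn
    have hfr : Module.finrank ℂ V = 0 := by rw [hdim]
    haveI : Subsingleton V := Module.finrank_zero_iff (R := ℂ) |>.mp hfr
    exact ⟨Fin.elim0, Basis.empty V, Fin.elim0, fun i => i.elim0, fun i => i.elim0,
      fun a => isEmptyElim a, fun a => isEmptyElim a⟩
  -- linearity consequences for h
  have hadd1 : ∀ x x' y, h (x + x') y = h x y + h x' y := by
    intro x x' y; have := hlin 1 x x' y; simpa using this
  have hzero1 : ∀ y, h 0 y = 0 := by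
    intro y
    have h2 := hadd1 0 0 y
    simp only [add_zero] at h2
    exact (add_eq_right.mp h2.symm)
  have hsmul1 : ∀ (c : ℂ) x y, h (c • x) y = c * h x y := by
    intro c x y; have := hlin c x 0 y; simpa [hzero1] using this
  have hadd2 : ∀ x y y', h x (y + y') = h x y + h x y' := by
    intro x y y'
    have := congrArg (starRingEnd ℂ) (hadd1 y y' x)
    simpa [map_add, hherm] using this
  have hsmul2 : ∀ (c : ℂ) x y, h x (c • y) = (starRingEnd ℂ) c * h x y := by
    intro c x y
    have := congrArg (starRingEnd ℂ) (hsmul1 c y x)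
    simpa [map_mul, hherm] using this
  -- linearity consequences for η'
  have hEadd1 : ∀ x x' y, η' (x + x') y = η' x y + η' x' y := by
    intro x x' y; have := hη1 1 x x' y; simpa using this
  have hEzero1 : ∀ y, η' 0 y = 0 := by
    intro y
    have h2 := hEadd1 0 0 y
    simp only [add_zero] at h2
    exact (add_eq_right.mp h2.symm)
  have hEsmul1 : ∀ (c : ℂ) x y, η' (c • x) y = c * η' x y := by
    intro c x y; have := hη1 c x 0 y; simpa [hEzero1] using this
  have hEneg1 : ∀ x y, η' (-x) y = -η' x y := by
    intro x y; have := hEsmul1 (-1) x y; simpa using this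
  have hEadd2 : ∀ x y y', η' x (y + y') = η' x y + η' x y' := by
    intro x y y'; have := hη2 1 y y' x; simpa using this
  have hEzero2 : ∀ x, η' x 0 = 0 := by
    intro x
    have h2 := hEadd2 x 0 0
    simp only [add_zero] at h2
    exact (add_eq_right.mp h2.symm)
  have hEsmul2 : ∀ (c : ℂ) x y, η' x (c • y) = (starRingEnd ℂ) c * η' x y := by
    intro c x y; have := hη2 c y 0 x; simpa [hEzero2] using this
  have hJneg : ∀ x, J (-x) = - J x := by
    intro x; have := hJsmul (-1) x; simpa using this
  -- the inner product space structure coming from h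
  letI cV : InnerProductSpace.Core ℂ V :=
    { inner := fun x y => h y x
      conj_inner_symm := fun x y => hherm x y
      re_inner_nonneg := fun x => by
        by_cases hx : x = 0
        · subst hx
          simp [hzero1]
        · exact le_of_lt (by simpa using hposdef x hx)
      add_left := fun x y z => hadd2 z x y
      smul_left := fun x y r => hsmul2 r y x
      definite := fun x hx => by
        by_contra hx0
        exact absurd (congrArg Complex.re hx) (hposdef x hx0).ne' }
  letI : NormedAddCommGroup V := cV.toNormedAddCommGroup
  letI : InnerProductSpace ℂ V := InnerProductSpace.ofCore cV.toCore
  haveI : CompleteSpace V := FiniteDimensional.complete ℂ V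
  have hip : ∀ x y : V, ⟪x, y⟫ = h y x := fun _ _ => rfl
  -- the Hermitian form B = I * η'
  set B : V → V → ℂ := fun x y => Complex.I * η' x y with hBdef
  have hBherm : ∀ x y, (starRingEnd ℂ) (B x y) = B y x := by
    intro x y
    simp only [hBdef, map_mul, Complex.conj_I, hreal]
    ring
  have hBJ : ∀ x y, B (J x) (J y) = B y x := by
    intro x y
    have := hanti y x
    simp only [Jact, neg_inj] at this
    simp only [hBdef, this]
  -- the associated operator T
  have hJinner : ∀ x y : V, ⟪J x, J y⟫ = ⟪y, x⟫ := fun x y => hJinv y x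
  let φ : V → (V →ₗ[ℂ] ℂ) := fun x =>
    { toFun := fun y => B y x
      map_add' := fun y y' => by simp only [hBdef, hEadd1]; ring
      map_smul' := fun c y => by
        simp only [hBdef, hEsmul1, RingHom.id_apply, smul_eq_mul]; ring }
  let F : V → V := fun x => (InnerProductSpace.toDual ℂ V).symm ((φ x).toContinuousLinearMap)
  have hF : ∀ x y, ⟪F x, y⟫ = B y x := by
    intro x y
    show ⟪(InnerProductSpace.toDual ℂ V).symm ((φ x).toContinuousLinearMap), y⟫ = B y x
    rw [InnerProductSpace.toDual_symm_apply]
    rfl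
  let T : V →ₗ[ℂ] V :=
    { toFun := F
      map_add' := fun x x' => by
        refine ext_inner_right ℂ fun y => ?_
        rw [hF, inner_add_left, hF, hF]
        simp only [hBdef, hEadd2]
        ring
      map_smul' := fun c x => by
        refine ext_inner_right ℂ fun y => ?_
        rw [hF, RingHom.id_apply, inner_smul_left, hF]
        simp only [hBdef, hEsmul2]
        ring }
  have htT : ∀ x y, ⟪T x, y⟫ = B y x := fun x y => hF x y
  have hsymT : ∀ x y : V, ⟪T x, y⟫ = ⟪x, T y⟫ := by
    intro x y
    rw [htT, ← inner_conj_symm, htT, hBherm]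
  -- T commutes with J
  have hswap : ∀ y w : V, h y (J w) = -h w (J y) := by
    intro y w
    have h1 := hJinv (-(J y)) w
    rw [hJneg, hJJ, neg_neg] at h1
    rw [h1]
    have := hsmul2 (-1) w (J y)
    simpa using this
  have hTJ : ∀ x, T (J x) = J (T x) := by
    intro x
    refine ext_inner_right ℂ fun z => ?_
    rw [htT]
    have h2 := hBJ (J z) x
    rw [hJJ] at h2
    have h3 : B (-z) (J x) = -B z (J x) := by
      simp only [hBdef, hEneg1]; ring
    have h6 : ⟪J z, T x⟫ = B x (J z) := by
      rw [← inner_conj_symm, htT, hBherm]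
    rw [hip] at h6
    have h7 : ⟪J (T x), z⟫ = -h (T x) (J z) := by
      rw [hip]; exact hswap z (T x)
    rw [h7, h6]
    linear_combination h3 - h2
  -- diagonalize
  obtain ⟨e, α, -, hon, hcross, heig⟩ :=
    aux_diag J hJsmul hJJ hJinner T hsymT hTJ n ⊤ (fun x _ => Submodule.mem_top)
      (fun x _ => Submodule.mem_top) (by rw [finrank_top, hdim])
  set f : Fin n ⊕ Fin n → V := Sum.elim e (fun i => J (e i)) with hfdef
  have hip2 : ∀ a a', ⟪f a, f a'⟫ = if a = a' then 1 else 0 := by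
    rintro (i | i) (j | j)
    · simp only [hfdef, Sum.elim_inl]
      rw [hon i j]
      by_cases hh : i = j <;> simp [hh]
    · simp only [hfdef, Sum.elim_inl, Sum.elim_inr]
      rw [hcross i j]
      simp
    · simp only [hfdef, Sum.elim_inl, Sum.elim_inr]
      rw [← inner_conj_symm, hcross j i, map_zero]
      simp
    · simp only [hfdef, Sum.elim_inr]
      rw [hJinner, hon j i]
      by_cases hh : i = j
      · subst hh; simp
      · rw [if_neg (fun hc => hh hc.symm), if_neg (fun hc => hh (Sum.inr.inj hc))]
  have honf : Orthonormal ℂ f := orthonormal_iff_ite.mpr hip2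
  haveI : Nonempty (Fin n ⊕ Fin n) := ⟨Sum.inl ⟨0, hn⟩⟩
  have hcard : Fintype.card (Fin n ⊕ Fin n) = finrank ℂ V := by
    simp [hdim]
    omega
  let b : Basis (Fin n ⊕ Fin n) ℂ V :=
    basisOfLinearIndependentOfCardEqFinrank honf.linearIndependent hcard
  have hb : ⇑b = f := coe_basisOfLinearIndependentOfCardEqFinrank _ _
  have hTf : ∀ a, T (f a) = ((α (Sum.elim id id a) : ℝ) : ℂ) • f a := by
    rintro (i | i)
    · simpa [hfdef] using heig i
    · simp only [hfdef, Sum.elim_inr, Sum.elim_inr]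
      rw [hTJ, heig i, hJsmul, Complex.conj_ofReal]
      rfl
  have hBinv : ∀ x y, η' x y = -Complex.I * B x y := by
    intro x y
    simp only [hBdef]
    linear_combination (η' x y) * Complex.I_sq
  refine ⟨e, b, α, ?_, ?_, ?_, ?_⟩
  · intro i
    rw [hb]; simp [hfdef]
  · intro i
    rw [hb]; simp [hfdef]
  · intro a a'
    rw [hb, ← hip, hip2 a' a]
    by_cases hh : a = a'
    · simp [hh]
    · rw [if_neg (fun hc => hh hc.symm), if_neg hh]
  · intro a a'
    rw [hb]
    have h7 : B (f a) (f a') = if a = a' then ((α (Sum.elim id id a) : ℝ) : ℂ) else 0 := by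
      rw [← htT (f a') (f a), hTf a', inner_smul_left, Complex.conj_ofReal, hip2 a' a]
      by_cases hh : a = a'
      · subst hh; simp
      · rw [if_neg (fun hc => hh hc.symm), if_neg hh, mul_zero]
    rw [hBinv, h7]
    by_cases hh : a = a' <;> simp [hh]

end
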